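/- Let $C_n$ be the cyclic group of order $n$ with generator $e$, and consider the group ring map $\cdot(e-1) \colon \mathbb{Z}[C_n] \to (\mathbb{Z}/n\mathbb{Z})[C_n]$ given by multiplying by $e-1$ and reducing coefficients mod $n$. Then the kernel of this map is exactly the set of elements $Na + nx$ with $a \in \mathbb{Z}$, $x \in \mathbb{Z}[C_n]$, where $N = \sum_{i=0}^{n-1} e^i$. -/

import Mathlib

open MonoidAlgebra

/-- The norm element `N = ∑_{i=0}^{n-1} e^i` of `ℤ[C_n]`. -/
noncomputable def normElt (n : ℕ) [NeZero n] : MonoidAlgebra ℤ (Multiplicative (ZMod n)) :=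
  ∑ g : Multiplicative (ZMod n), MonoidAlgebra.single g 1

/-- The coefficient-reduction ring homomorphism `ℤ[C_n] → (ℤ/nℤ)[C_n]`. -/
noncomputable def reduceMod (n : ℕ) :
    MonoidAlgebra ℤ (Multiplicative (ZMod n)) →+*
      MonoidAlgebra (ZMod n) (Multiplicative (ZMod n)) :=
  MonoidAlgebra.liftNCRingHom
    ((MonoidAlgebra.singleOneRingHom).comp (Int.castRingHom (ZMod n)))
    (MonoidAlgebra.of (ZMod n) (Multiplicative (ZMod n)))
    (fun {_ _} => Commute.all _ _)

lemma reduceMod_single (n : ℕ) (g : Multiplicative (ZMod n)) (b : ℤ) :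
    reduceMod n (MonoidAlgebra.single g b) = MonoidAlgebra.single g (b : ZMod n) := by
  simp [reduceMod, MonoidAlgebra.liftNCRingHom, MonoidAlgebra.liftNC_single,
    MonoidAlgebra.singleOneRingHom, MonoidAlgebra.of_apply]
  rw [MonoidAlgebra.intCast_def, MonoidAlgebra.single_mul_single, one_mul, mul_one]

lemma reduceMod_apply (n : ℕ) (f : MonoidAlgebra ℤ (Multiplicative (ZMod n)))
    (g : Multiplicative (ZMod n)) : (reduceMod n f).coeff g = ((f.coeff g : ℤ) : ZMod n) := by
  induction f using MonoidAlgebra.induction_linear with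
  | zero => simp
  | add a b ha hb =>
    rw [map_add, MonoidAlgebra.coeff_add, MonoidAlgebra.coeff_add, Finsupp.add_apply, Finsupp.add_apply, ha, hb, Int.cast_add]
  | single a b => rw [reduceMod_single]; simp only [MonoidAlgebra.coeff_single, Finsupp.single_apply]; split <;> simp

lemma normElt_apply (n : ℕ) [NeZero n] (g : Multiplicative (ZMod n)) :
    (normElt n).coeff g = 1 := by
  rw [normElt, MonoidAlgebra.coeff_sum, Finset.sum_apply']; simp [MonoidAlgebra.coeff_single, Finsupp.single_apply]

lemma normElt_mul (n : ℕ) [NeZero n] :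
    normElt n * (MonoidAlgebra.single (Multiplicative.ofAdd (1 : ZMod n)) 1 - 1) = 0 := by
  rw [mul_sub, mul_one, sub_eq_zero, normElt, Finset.sum_mul]
  simp only [MonoidAlgebra.single_mul_single, mul_one]
  exact Fintype.sum_equiv (Equiv.mulRight (Multiplicative.ofAdd (1 : ZMod n))) _ _
    (fun g => rfl)

/-- The kernel of the map `ℤ[C_n] → (ℤ/nℤ)[C_n]`, `x ↦ x·(e-1) mod n`, is exactly
the set of elements `N a + n x`. -/
theorem kernel_mul_sub_one (n : ℕ) [NeZero n]
    (x : MonoidAlgebra ℤ (Multiplicative (ZMod n))) :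
    reduceMod n (x * (MonoidAlgebra.single (Multiplicative.ofAdd (1 : ZMod n)) 1 - 1)) = 0 ↔
      ∃ (a : ℤ) (c : MonoidAlgebra ℤ (Multiplicative (ZMod n))),
        x = a • normElt n + (n : ℤ) • c := by
  constructor
  · intro h
    -- coefficients constant mod n
    have key : ∀ g : Multiplicative (ZMod n), ((x.coeff g : ℤ) : ZMod n) = ((x.coeff 1 : ℤ) : ZMod n) := by
      have h1 : ∀ g : Multiplicative (ZMod n),
          ((x.coeff (g * Multiplicative.ofAdd (1 : ZMod n)) : ℤ) : ZMod n) = ((x.coeff g : ℤ) : ZMod n) := by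
        intro g
        have := congrArg (fun f => f.coeff (g * Multiplicative.ofAdd (1 : ZMod n))) h
        simp only [map_mul, map_sub, map_one, reduceMod_single] at this
        rw [mul_sub, mul_one] at this
        have h2 : ((reduceMod n x * MonoidAlgebra.single (Multiplicative.ofAdd (1 : ZMod n))
            ((1 : ℤ) : ZMod n) - reduceMod n x).coeff (g * Multiplicative.ofAdd (1 : ZMod n))) = 0 := by
          rw [this]; rfl
        rw [MonoidAlgebra.coeff_sub, Finsupp.sub_apply, MonoidAlgebra.coeff_mul_single_apply, sub_eq_zero,
          mul_inv_cancel_right] at h2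
        simpa [reduceMod_apply] using h2.symm
      have hk : ∀ (k : ℕ) (g : Multiplicative (ZMod n)),
          ((x.coeff (g * (Multiplicative.ofAdd (1 : ZMod n)) ^ k) : ℤ) : ZMod n)
            = ((x.coeff g : ℤ) : ZMod n) := by
        intro k
        induction k with
        | zero => simp
        | succ m ih => intro g; rw [pow_succ, ← mul_assoc, h1, ih]
      intro g
      have := hk (Multiplicative.toAdd g).val 1
      rw [one_mul] at this
      convert this using 3
      have : (Multiplicative.ofAdd (1 : ZMod n)) ^ (Multiplicative.toAdd g).val
          = Multiplicative.ofAdd (((Multiplicative.toAdd g).val : ZMod n)) := by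
        rw [← ofAdd_nsmul]; norm_num
      rw [this, ZMod.natCast_val, ZMod.cast_id]
      rfl
    have hdvd : ∀ g : Multiplicative (ZMod n), (n : ℤ) ∣ (x.coeff g - x.coeff 1) := by
      intro g
      have : (((x.coeff g - x.coeff 1 : ℤ)) : ZMod n) = 0 := by push_cast; rw [key g]; ring
      exact_mod_cast (ZMod.intCast_zmod_eq_zero_iff_dvd _ n).mp this
    refine ⟨x.coeff 1, MonoidAlgebra.ofCoeff (Finsupp.equivFunOnFinite.symm (fun g => (x.coeff g - x.coeff 1) / n)), ?_⟩
    ext g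
    rw [MonoidAlgebra.coeff_add, Finsupp.add_apply, MonoidAlgebra.coeff_smul, MonoidAlgebra.coeff_smul,
      Finsupp.smul_apply, Finsupp.smul_apply, normElt_apply]
    simp only [smul_eq_mul, mul_one, MonoidAlgebra.coeff_ofCoeff, Finsupp.coe_equivFunOnFinite_symm]
    rw [Int.mul_ediv_cancel' (hdvd g)]
    ring
  · rintro ⟨a, c, rfl⟩
    rw [add_mul, smul_mul_assoc, normElt_mul, smul_zero, zero_add, smul_mul_assoc, map_zsmul]
    have : ((n : ℤ) : MonoidAlgebra (ZMod n) (Multiplicative (ZMod n))) = 0 := by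
      push_cast
      rw [← map_natCast (algebraMap (ZMod n) (MonoidAlgebra (ZMod n) (Multiplicative (ZMod n)))),
        ZMod.natCast_self, map_zero]
    rw [zsmul_eq_mul, this, zero_mul]
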